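/- Let A be a real 3×3 matrix with columns a₁, a₂, a₃. Then the characteristic polynomial of AᵀA equals X³ − (‖a₁‖² + ‖a₂‖² + ‖a₃‖²)·X² + (‖a₂ × a₃‖² + ‖a₁ × a₃‖² + ‖a₁ × a₂‖²)·X − (det A)². -/

import Mathlib

open Matrix Polynomial

lemma norm_sq_euclid3 (v : Fin 3 → ℝ) :
    ‖(EuclideanSpace.equiv (Fin 3) ℝ).symm v‖ ^ 2 = v 0 ^ 2 + v 1 ^ 2 + v 2 ^ 2 := by
  rw [EuclideanSpace.norm_eq, Real.sq_sqrt (by positivity)]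
  simp [Fin.sum_univ_three, sq_abs]

theorem charpoly_transpose_mul_self_3d (A : Matrix (Fin 3) (Fin 3) ℝ)
    (a₁ a₂ a₃ : Fin 3 → ℝ)
    (h1 : a₁ = fun i => A i 0) (h2 : a₂ = fun i => A i 1) (h3 : a₃ = fun i => A i 2) :
    (Aᵀ * A).charpoly =
      X ^ 3
        - C (‖(EuclideanSpace.equiv (Fin 3) ℝ).symm a₁‖ ^ 2 +
              ‖(EuclideanSpace.equiv (Fin 3) ℝ).symm a₂‖ ^ 2 +
              ‖(EuclideanSpace.equiv (Fin 3) ℝ).symm a₃‖ ^ 2) * X ^ 2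
        + C (‖(EuclideanSpace.equiv (Fin 3) ℝ).symm (crossProduct a₂ a₃)‖ ^ 2 +
              ‖(EuclideanSpace.equiv (Fin 3) ℝ).symm (crossProduct a₁ a₃)‖ ^ 2 +
              ‖(EuclideanSpace.equiv (Fin 3) ℝ).symm (crossProduct a₁ a₂)‖ ^ 2) * X
        - C (A.det ^ 2) := by
  subst h1 h2 h3
  rw [Matrix.charpoly, Matrix.det_fin_three, Matrix.det_fin_three]
  simp only [norm_sq_euclid3, cross_apply, charmatrix_apply, Matrix.diagonal_apply,
    Matrix.transpose_apply, Matrix.mul_apply, Fin.sum_univ_three]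
  norm_num [Fin.ext_iff, Matrix.cons_val_zero, Matrix.cons_val_one, Matrix.cons_val_two, Matrix.head_cons]
  ring
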